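/- Let r be a positive integer and let f be a multivariate polynomial over ℂ in variables x_0, …, x_n that is irreducible (prime) and not associated to any variable x_i. Let F be a finite set of polynomials such that: every element of F equals τ·f for some r-th root-of-unity tuple τ; distinct elements of F are not associated to each other; and for every r-th root-of-unity tuple τ, the polynomial τ·f is associated to some element of F. Set g := ∏_{h ∈ F} h. Then: (a) g lies in the ℂ-subalgebra A of the polynomial ring generated by x_0^r, …, x_n^r; and (b) for every h ∈ A, f divides h in the full polynomial ring if and only if there exists q ∈ A with h = q * g. (That is, the ideal (f) ∩ ℂ[x_0^r, …, x_n^r] of the subring ℂ[x_0^r, …, x_n^r] is principal, generated by the product over the orbit of f.) -/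

import Mathlib

open MvPolynomial

namespace OrbitAux

variable {n r : ℕ}

noncomputable abbrev sc (τ : Fin (n+1) → ℂ) :
    MvPolynomial (Fin (n+1)) ℂ →ₐ[ℂ] MvPolynomial (Fin (n+1)) ℂ :=
  aeval (fun i => τ i • X i)

lemma sc_comp (τ τ' : Fin (n+1) → ℂ) (p : MvPolynomial (Fin (n+1)) ℂ) :
    sc τ (sc τ' p) = sc (τ * τ') p := by
  have : (sc τ).comp (sc τ') = sc (n := n) (τ * τ') := by
    apply MvPolynomial.algHom_ext
    intro i
    simp [sc, smul_smul, mul_comm]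
  calc sc τ (sc τ' p) = ((sc τ).comp (sc τ')) p := rfl
    _ = sc (τ * τ') p := by rw [this]

lemma sc_one (p : MvPolynomial (Fin (n+1)) ℂ) : sc (1 : Fin (n+1) → ℂ) p = p := by
  have : sc (n := n) (1 : Fin (n+1) → ℂ) = AlgHom.id ℂ _ := by
    apply MvPolynomial.algHom_ext
    intro i
    simp [sc]
  rw [this]; rfl

lemma coeff_sc (τ : Fin (n+1) → ℂ) (p : MvPolynomial (Fin (n+1)) ℂ) (d : Fin (n+1) →₀ ℕ) :
    coeff d (sc τ p) = (∏ i, τ i ^ d i) * coeff d p := by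
  have hmon : ∀ (e : Fin (n+1) →₀ ℕ) (c : ℂ),
      sc τ (monomial e c) = (∏ i, τ i ^ e i) • monomial e c := by
    intro e c
    rw [sc, aeval_monomial]
    have h1 : (e.prod fun i k => (τ i • X i : MvPolynomial (Fin (n+1)) ℂ) ^ k)
        = (∏ i, τ i ^ e i) • e.prod fun i k => (X i : MvPolynomial (Fin (n+1)) ℂ) ^ k := by
      rw [Finsupp.prod, Finsupp.prod]
      rw [Finset.prod_congr rfl (fun i _ => smul_pow (τ i) (X i) (e i))]
      simp_rw [smul_eq_C_mul, Finset.prod_mul_distrib, ← map_prod]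
      congr 2
      rw [← Finset.prod_subset (Finset.subset_univ e.support)]
      intro i _ hi
      simp [Finsupp.notMem_support_iff.mp hi]
    rw [h1, monomial_eq]
    simp [Algebra.smul_def, mul_left_comm, mul_comm, mul_assoc]
  conv_lhs => rw [p.as_sum, map_sum]
  simp_rw [hmon]
  rw [coeff_sum]
  simp_rw [coeff_smul, coeff_monomial]
  classical
  rw [Finset.sum_eq_single d]
  · simp
  · intro e _ hne; simp [hne]
  · intro hd; simp [MvPolynomial.notMem_support_iff.mp hd]

lemma sc_inv_cancel (τ : Fin (n+1) → ℂ) (hτ : ∀ i, τ i ≠ 0)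
    (p : MvPolynomial (Fin (n+1)) ℂ) : sc τ⁻¹ (sc τ p) = p := by
  rw [sc_comp]
  have : τ⁻¹ * τ = 1 := by
    funext i; exact inv_mul_cancel₀ (hτ i)
  rw [this, sc_one]

noncomputable def scE (τ : Fin (n+1) → ℂ) (hτ : ∀ i, τ i ≠ 0) :
    MvPolynomial (Fin (n+1)) ℂ ≃ₐ[ℂ] MvPolynomial (Fin (n+1)) ℂ :=
  AlgEquiv.ofAlgHom (sc τ) (sc τ⁻¹)
    (by
      apply MvPolynomial.algHom_ext; intro i
      simp only [AlgHom.coe_comp, Function.comp_apply, AlgHom.coe_id, id_eq]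
      show sc τ (sc τ⁻¹ (X i)) = X i
      rw [sc_comp]
      have : τ * τ⁻¹ = 1 := by funext i; exact mul_inv_cancel₀ (hτ i)
      rw [this, sc_one])
    (by
      apply MvPolynomial.algHom_ext; intro i
      simp only [AlgHom.coe_comp, Function.comp_apply, AlgHom.coe_id, id_eq]
      show sc τ⁻¹ (sc τ (X i)) = X i
      exact sc_inv_cancel τ hτ _)

lemma scE_apply (τ : Fin (n+1) → ℂ) (hτ : ∀ i, τ i ≠ 0) (p : MvPolynomial (Fin (n+1)) ℂ) :
    scE τ hτ p = sc τ p := rfl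

lemma sc_prime {τ : Fin (n+1) → ℂ} (hτ : ∀ i, τ i ≠ 0)
    {p : MvPolynomial (Fin (n+1)) ℂ} (hp : Prime p) : Prime (sc τ p) :=
  (MulEquiv.prime_iff (scE τ hτ).toMulEquiv).mpr hp

lemma ne_zero_of_pow_root {r : ℕ} (hr : 0 < r) {τ : Fin (n+1) → ℂ}
    (hτ : ∀ i, τ i ^ r = 1) : ∀ i, τ i ≠ 0 := by
  intro i h
  have := hτ i
  rw [h, zero_pow hr.ne'] at this
  exact zero_ne_one this

lemma sc_fix_adjoin {r : ℕ} {τ : Fin (n+1) → ℂ} (hτ : ∀ i, τ i ^ r = 1)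
    {p : MvPolynomial (Fin (n+1)) ℂ}
    (hp : p ∈ Algebra.adjoin ℂ
      (Set.range fun i : Fin (n+1) => (X i : MvPolynomial (Fin (n+1)) ℂ) ^ r)) :
    sc τ p = p := by
  induction hp using Algebra.adjoin_induction with
  | mem x hx =>
      obtain ⟨i, rfl⟩ := hx
      show sc τ (X i ^ r) = X i ^ r
      rw [map_pow]
      have : sc τ (X i) = τ i • X i := aeval_X _ i
      rw [this, smul_pow, hτ i, one_smul]
  | algebraMap c => exact (sc τ).commutes c
  | add x y _ _ hx hy => rw [map_add, hx, hy]
  | mul x y _ _ hx hy => rw [map_mul, hx, hy]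

lemma mem_adjoin_of_supp {r : ℕ} (hr : 0 < r) {p : MvPolynomial (Fin (n+1)) ℂ}
    (hp : ∀ d ∈ p.support, ∀ i, r ∣ d i) :
    p ∈ Algebra.adjoin ℂ
      (Set.range fun i : Fin (n+1) => (X i : MvPolynomial (Fin (n+1)) ℂ) ^ r) := by
  rw [p.as_sum]
  apply Subalgebra.sum_mem
  intro d hd
  rw [monomial_eq]
  apply Subalgebra.mul_mem
  · exact Subalgebra.algebraMap_mem _ (coeff d p)
  · rw [Finsupp.prod]
    apply Subalgebra.prod_mem
    intro i _
    obtain ⟨k, hk⟩ := hp d hd i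
    rw [hk, pow_mul]
    refine Subalgebra.pow_mem _ (Algebra.subset_adjoin ?_) k
    exact ⟨i, rfl⟩

lemma dvd_of_scale_coeff {r : ℕ} (hr : 0 < r) {p : MvPolynomial (Fin (n+1)) ℂ}
    (hfix : ∀ τ : Fin (n+1) → ℂ, (∀ i, τ i ^ r = 1) → sc τ p = p) :
    ∀ d ∈ p.support, ∀ i, r ∣ d i := by
  intro d hd i
  set ζ : ℂ := Complex.exp (2 * Real.pi * Complex.I / r)
  have hζ : IsPrimitiveRoot ζ r := Complex.isPrimitiveRoot_exp r hr.ne'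
  classical
  set τ : Fin (n+1) → ℂ := Function.update (fun _ => 1) i ζ with hτdef
  have hτ : ∀ j, τ j ^ r = 1 := by
    intro j
    by_cases h : j = i
    · subst h; simp [τ, hζ.pow_eq_one]
    · simp [τ, Function.update_of_ne h]
  have h1 := coeff_sc τ p d
  rw [hfix τ hτ] at h1
  have h2 : (∏ j, τ j ^ d j) = ζ ^ d i := by
    rw [Finset.prod_eq_single i]
    · simp [τ]
    · intro j _ hj; simp [τ, Function.update_of_ne hj]
    · simp
  rw [h2] at h1
  have h3 : coeff d p ≠ 0 := MvPolynomial.mem_support_iff.mp hd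
  have h4 : ζ ^ d i = 1 := by
    have : (ζ ^ d i) * coeff d p = 1 * coeff d p := by rw [one_mul]; exact h1.symm
    exact mul_right_cancel₀ h3 this
  exact (hζ.pow_eq_one_iff_dvd _).mp h4

lemma isUnit_eq_C : ∀ (m : ℕ) (u : MvPolynomial (Fin m) ℂ), IsUnit u →
    ∃ c : ℂ, c ≠ 0 ∧ u = C c := by
  intro m
  induction m with
  | zero =>
      intro u hu
      obtain ⟨c, rfl⟩ : ∃ c : ℂ, u = C c := ⟨constantCoeff u, u.eq_C_of_isEmpty⟩
      refine ⟨c, ?_, rfl⟩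
      intro hc
      rw [hc, map_zero] at hu
      exact not_isUnit_zero hu
  | succ m ih =>
      intro u hu
      set e := MvPolynomial.finSuccEquiv ℂ m
      have hu' : IsUnit (e u) := hu.map e
      obtain ⟨v, hv, hvu⟩ := Polynomial.isUnit_iff.mp hu'
      obtain ⟨c, hc, rfl⟩ := ih v hv
      refine ⟨c, hc, ?_⟩
      have h1 : Polynomial.C (C c : MvPolynomial (Fin m) ℂ)
          = e (C c : MvPolynomial (Fin (m+1)) ℂ) := by
        show _ = e (algebraMap ℂ _ c)
        rw [AlgEquiv.commutes]
        rfl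
      rw [h1] at hvu
      exact (e.injective hvu).symm

lemma prime_X_mv (i : Fin (n+1)) : Prime (X i : MvPolynomial (Fin (n+1)) ℂ) := by
  have h0 : Prime (X (0 : Fin (n+1)) : MvPolynomial (Fin (n+1)) ℂ) := by
    have hp : Prime (Polynomial.X : Polynomial (MvPolynomial (Fin n) ℂ)) :=
      Polynomial.prime_X
    have := (MulEquiv.prime_iff (MvPolynomial.finSuccEquiv ℂ n).toMulEquiv
      (p := (X (0 : Fin (n+1)) : MvPolynomial (Fin (n+1)) ℂ))).symm
    rw [this]
    show Prime ((MvPolynomial.finSuccEquiv ℂ n) (X 0))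
    rw [MvPolynomial.finSuccEquiv_X_zero]
    exact hp
  set e := MvPolynomial.renameEquiv ℂ (Equiv.swap (0 : Fin (n+1)) i) with he
  have h2 := (MulEquiv.prime_iff e.toMulEquiv (p := (X (0 : Fin (n+1)) : MvPolynomial (Fin (n+1)) ℂ))).mpr h0
  have hX : e (X (0 : Fin (n+1))) = X i := by
    rw [he]
    show rename (Equiv.swap (0 : Fin (n+1)) i) (X 0) = X i
    rw [rename_X, Equiv.swap_apply_left]
  rwa [show (e.toMulEquiv) (X (0 : Fin (n+1))) = e (X 0) from rfl, hX] at h2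

lemma modEq_of_pow_eq {ζ : ℂ} {r a b : ℕ} (hr : 0 < r) (hζ : IsPrimitiveRoot ζ r)
    (h : ζ ^ a = ζ ^ b) : a % r = b % r := by
  rcases le_total b a with hab | hab
  · have hz : ζ ≠ 0 := hζ.ne_zero hr.ne'
    have h1 : ζ ^ (a - b) * ζ ^ b = 1 * ζ ^ b := by
      rw [← pow_add, Nat.sub_add_cancel hab, one_mul, h]
    have h2 : ζ ^ (a - b) = 1 := mul_right_cancel₀ (pow_ne_zero b hz) h1
    have h3 : r ∣ a - b := (hζ.pow_eq_one_iff_dvd _).mp h2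
    exact ((Nat.modEq_iff_dvd' hab).mpr h3).symm
  · have hz : ζ ≠ 0 := hζ.ne_zero hr.ne'
    have h1 : ζ ^ (b - a) * ζ ^ a = 1 * ζ ^ a := by
      rw [← pow_add, Nat.sub_add_cancel hab, one_mul, h]
    have h2 : ζ ^ (b - a) = 1 := mul_right_cancel₀ (pow_ne_zero a hz) h1
    have h3 : r ∣ b - a := (hζ.pow_eq_one_iff_dvd _).mp h2
    exact (Nat.modEq_iff_dvd' hab).mpr h3

lemma prod_primes_dvd_aux {α : Type*} [CommMonoidWithZero α] [IsCancelMulZero α] (s : Finset α) (h : α)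
    (hp : ∀ p ∈ s, Prime p) (hna : ∀ p ∈ s, ∀ q ∈ s, p ≠ q → ¬ Associated p q)
    (hd : ∀ p ∈ s, p ∣ h) : (∏ p ∈ s, p) ∣ h := by
  classical
  induction s using Finset.induction_on with
  | empty => simpa using one_dvd h
  | @insert a s ha ih =>
      rw [Finset.prod_insert ha]
      have hs : (∏ p ∈ s, p) ∣ h :=
        ih (fun p hp' => hp p (Finset.mem_insert_of_mem hp'))
          (fun p hp' q hq' => hna p (Finset.mem_insert_of_mem hp') q (Finset.mem_insert_of_mem hq'))
          (fun p hp' => hd p (Finset.mem_insert_of_mem hp'))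
      obtain ⟨q, hq⟩ := hs
      have hap : Prime a := hp a (Finset.mem_insert_self a s)
      have hah : a ∣ (∏ p ∈ s, p) * q := hq ▸ hd a (Finset.mem_insert_self a s)
      rcases hap.dvd_or_dvd hah with h1 | h2
      · exfalso
        obtain ⟨b, hb, hab⟩ := hap.exists_mem_finset_dvd h1
        have hassoc : Associated a b := hap.associated_of_dvd (hp b (Finset.mem_insert_of_mem hb)) hab
        have hne : a ≠ b := fun he => ha (he ▸ hb)
        exact hna a (Finset.mem_insert_self a s) b (Finset.mem_insert_of_mem hb) hne hassoc
      · obtain ⟨q', rfl⟩ := h2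
        exact ⟨q', by rw [hq, mul_left_comm, mul_assoc]⟩

end OrbitAux

open OrbitAux

/-- For an irreducible polynomial `f`, not associated to any variable, the product `g`
over a complete set of pairwise non-associated representatives of the orbit of `f`
under rescalings by `r`-th root-of-unity tuples is a polynomial in the `r`-th powers
of the variables, and it generates the ideal `(f) ∩ ℂ[x₀^r, …, xₙ^r]` of the subring
`ℂ[x₀^r, …, xₙ^r]`. -/
theorem orbit_product_generates_contraction (r n : ℕ) (hr : 0 < r)
    (f : MvPolynomial (Fin (n + 1)) ℂ) (hf : Prime f)
    (hfx : ∀ i, ¬ Associated f (X i))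
    (F : Finset (MvPolynomial (Fin (n + 1)) ℂ))
    (hF1 : ∀ h ∈ F, ∃ τ : Fin (n + 1) → ℂ, (∀ i, (τ i) ^ r = 1) ∧
        h = aeval (fun i => τ i • (X i : MvPolynomial (Fin (n + 1)) ℂ)) f)
    (hF2 : ∀ h₁ ∈ F, ∀ h₂ ∈ F, h₁ ≠ h₂ → ¬ Associated h₁ h₂)
    (hF3 : ∀ τ : Fin (n + 1) → ℂ, (∀ i, (τ i) ^ r = 1) →
        ∃ h ∈ F, Associated (aeval (fun i => τ i • (X i : MvPolynomial (Fin (n + 1)) ℂ)) f) h)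
    (g : MvPolynomial (Fin (n + 1)) ℂ) (hg : g = ∏ h ∈ F, h) :
    g ∈ Algebra.adjoin ℂ
        (Set.range fun i : Fin (n + 1) => (X i : MvPolynomial (Fin (n + 1)) ℂ) ^ r) ∧
      ∀ h ∈ Algebra.adjoin ℂ
          (Set.range fun i : Fin (n + 1) => (X i : MvPolynomial (Fin (n + 1)) ℂ) ^ r),
        (f ∣ h ↔ ∃ q ∈ Algebra.adjoin ℂ
            (Set.range fun i : Fin (n + 1) => (X i : MvPolynomial (Fin (n + 1)) ℂ) ^ r),
          h = q * g) := by
  classical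
  -- reinterpret hF1, hF3 via `sc`
  have hF1' : ∀ h ∈ F, ∃ τ : Fin (n + 1) → ℂ, (∀ i, (τ i) ^ r = 1) ∧ h = sc τ f := hF1
  have hF3' : ∀ τ : Fin (n + 1) → ℂ, (∀ i, (τ i) ^ r = 1) →
      ∃ h ∈ F, Associated (sc τ f) h := hF3
  -- f divides g
  obtain ⟨h₀, hh₀F, hassoc₀⟩ := hF3' 1 (fun _ => one_pow r)
  rw [sc_one] at hassoc₀
  have hfdvdg : f ∣ g := by
    rw [hg]
    exact hassoc₀.dvd.trans (Finset.dvd_prod_of_mem (fun h => h) hh₀F)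
  have hFprime : ∀ h ∈ F, Prime h := by
    intro h hh
    obtain ⟨τ, hτ, rfl⟩ := hF1' h hh
    exact sc_prime (ne_zero_of_pow_root hr hτ) hf
  have hgne : g ≠ 0 := by
    rw [hg]
    exact Finset.prod_ne_zero_iff.mpr (fun h hh => (hFprime h hh).ne_zero)
  -- the orbit product is associated to itself under every rescaling
  have horb : ∀ τ : Fin (n + 1) → ℂ, (∀ i, τ i ^ r = 1) → Associated (sc τ g) g := by
    intro τ hτ
    have hτne := ne_zero_of_pow_root hr hτ
    have key : ∀ h ∈ F, ∃ h' ∈ F, Associated (sc τ h) h' := by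
      intro h hh
      obtain ⟨τh, hτh, rfl⟩ := hF1' h hh
      rw [sc_comp]
      exact hF3' (τ * τh) (fun i => by rw [Pi.mul_apply, mul_pow, hτ i, hτh i, one_mul])
    choose φ hφF hφa using key
    have hinj : ∀ a₁ a₂ (ha₁ : a₁ ∈ F) (ha₂ : a₂ ∈ F), φ a₁ ha₁ = φ a₂ ha₂ → a₁ = a₂ := by
      intro a₁ a₂ ha₁ ha₂ he
      by_contra hne
      have h1 : Associated (sc τ a₁) (sc τ a₂) :=
        (hφa a₁ ha₁).trans (he ▸ (hφa a₂ ha₂).symm)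
      have h2 := h1.map (sc τ⁻¹)
      rw [sc_inv_cancel τ hτne, sc_inv_cancel τ hτne] at h2
      exact hF2 a₁ ha₁ a₂ ha₂ hne h2
    have hsurj := Finset.surj_on_of_inj_on_of_card_le φ hφF hinj le_rfl
    have hprodeq : (∏ h ∈ F.attach, φ h.1 h.2) = ∏ h ∈ F, h := by
      rw [← Finset.prod_attach F (fun h => h)]
      apply Finset.prod_bij (fun (a : {x // x ∈ F}) _ => (⟨φ a.1 a.2, hφF a.1 a.2⟩ : {x // x ∈ F}))
      · intro a _; exact Finset.mem_attach _ _
      · intro a _ b _ he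
        exact Subtype.ext (hinj a.1 b.1 a.2 b.2 (by simpa using congrArg Subtype.val he))
      · intro b _
        obtain ⟨a, ha, hab⟩ := hsurj b.1 b.2
        exact ⟨⟨a, ha⟩, Finset.mem_attach _ _, Subtype.ext hab.symm⟩
      · intro a _; rfl
    have h3 : Associated (∏ h ∈ F.attach, sc τ h.1) (∏ h ∈ F.attach, φ h.1 h.2) :=
      Associated.prod _ _ _ (fun a _ => hφa a.1 a.2)
    have h4 : sc τ g = ∏ h ∈ F.attach, sc τ h.1 := by
      rw [hg, map_prod, ← Finset.prod_attach F (fun h => sc τ h)]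
    rw [h4, hg, ← hprodeq]
    exact h3
  -- all exponents in g are divisible by r
  have hsupp : ∀ d ∈ g.support, ∀ i, r ∣ d i := by
    intro d hd i
    set ζ : ℂ := Complex.exp (2 * Real.pi * Complex.I / r) with hζdef
    have hζ : IsPrimitiveRoot ζ r := Complex.isPrimitiveRoot_exp r hr.ne'
    set τ : Fin (n+1) → ℂ := Function.update (fun _ => 1) i ζ with hτdef
    have hτ : ∀ j, τ j ^ r = 1 := by
      intro j
      by_cases h : j = i
      · subst h; simp [τ, hζ.pow_eq_one]
      · simp [τ, Function.update_of_ne h]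
    have hprodτ : ∀ e : Fin (n+1) →₀ ℕ, (∏ j, τ j ^ e j) = ζ ^ e i := by
      intro e
      rw [Finset.prod_eq_single i]
      · simp [τ]
      · intro j _ hj; simp [τ, Function.update_of_ne hj]
      · simp
    -- get the unit
    obtain ⟨u, hu⟩ := horb τ hτ
    obtain ⟨c, hc, hcu⟩ := isUnit_eq_C (n+1) (u : MvPolynomial (Fin (n+1)) ℂ) u.isUnit
    -- coefficient relation: for all e in supp g, ζ ^ e i * c = 1
    have hkey : ∀ e ∈ g.support, ζ ^ e i * c = 1 := by
      intro e he
      have h1 : coeff e (sc τ g * (u : MvPolynomial (Fin (n+1)) ℂ)) = coeff e g := by rw [hu]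
      rw [hcu] at h1
      rw [mul_comm, ← smul_eq_C_mul, coeff_smul, coeff_sc, hprodτ] at h1
      rw [smul_eq_mul] at h1
      have hce : coeff e g ≠ 0 := MvPolynomial.mem_support_iff.mp he
      have h2 : (c * ζ ^ e i) * coeff e g = 1 * coeff e g := by
        rw [one_mul, mul_assoc]; exact h1
      have h3 := mul_right_cancel₀ hce h2
      rw [mul_comm] at h3
      exact h3
    -- hence ζ ^ d i is the same for all monomials; compare with monomial of minimal? use any e₀:
    by_contra hnot
    -- every monomial has positive exponent at i
    have hne0 : ∀ e ∈ g.support, e i ≠ 0 := by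
      intro e he h0
      have hA := hkey e he
      rw [h0, pow_zero, one_mul] at hA
      -- c = 1, then ζ ^ d i = 1
      have hB := hkey d hd
      rw [hA, mul_one] at hB
      exact hnot ((hζ.pow_eq_one_iff_dvd _).mp hB)
    have hXdvd : X i ∣ g := by
      conv_rhs => rw [g.as_sum]
      exact Finset.dvd_sum (fun e he => X_dvd_monomial.mpr (Or.inr (hne0 e he)))
    have hXp : Prime (X i : MvPolynomial (Fin (n+1)) ℂ) := prime_X_mv i
    rw [hg] at hXdvd
    obtain ⟨h, hhF, hXh⟩ := hXp.exists_mem_finset_dvd hXdvd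
    have hassoc : Associated (X i : MvPolynomial (Fin (n+1)) ℂ) h :=
      hXp.associated_of_dvd (hFprime h hhF) hXh
    obtain ⟨τh, hτh, rfl⟩ := hF1' h hhF
    have hτhne := ne_zero_of_pow_root hr hτh
    have h5 := hassoc.symm.map (sc τh⁻¹)
    rw [sc_inv_cancel τh hτhne] at h5
    have h6 : sc τh⁻¹ (X i) = C ((τh i)⁻¹) * X i := by
      rw [show sc τh⁻¹ (X i) = τh⁻¹ i • X i from aeval_X _ i, Pi.inv_apply, smul_eq_C_mul]
    have h7 : Associated (C ((τh i)⁻¹) * (X i : MvPolynomial (Fin (n+1)) ℂ)) (X i) :=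
      associated_unit_mul_left _ _
        ((isUnit_iff_ne_zero.mpr (inv_ne_zero (hτhne i))).map (C : ℂ →+* _))
    exact hfx i (h5.trans (h6 ▸ h7))
  have hgA : g ∈ Algebra.adjoin ℂ
      (Set.range fun i : Fin (n + 1) => (X i : MvPolynomial (Fin (n + 1)) ℂ) ^ r) :=
    mem_adjoin_of_supp hr hsupp
  refine ⟨hgA, ?_⟩
  intro h hhA
  constructor
  · intro hfh
    have hdvd : ∀ p ∈ F, p ∣ h := by
      intro p hp
      obtain ⟨τ, hτ, rfl⟩ := hF1' p hp
      have := map_dvd (sc τ) hfh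
      rwa [sc_fix_adjoin hτ hhA] at this
    have hgdvd : g ∣ h := by
      rw [hg]
      exact prod_primes_dvd_aux F h hFprime hF2 hdvd
    obtain ⟨q, hq⟩ := hgdvd
    have hqfix : ∀ τ : Fin (n+1) → ℂ, (∀ i, τ i ^ r = 1) → sc τ q = q := by
      intro τ hτ
      have h1 : sc τ (g * q) = g * q := by
        rw [← hq]; exact sc_fix_adjoin hτ hhA
      rw [map_mul, sc_fix_adjoin hτ hgA] at h1
      exact mul_left_cancel₀ hgne h1
    have hqA : q ∈ Algebra.adjoin ℂ
        (Set.range fun i : Fin (n + 1) => (X i : MvPolynomial (Fin (n + 1)) ℂ) ^ r) :=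
      mem_adjoin_of_supp hr (dvd_of_scale_coeff hr hqfix)
    exact ⟨q, hqA, by rw [hq, mul_comm]⟩
  · rintro ⟨q, hqA, rfl⟩
    exact hfdvdg.trans (Dvd.intro_left q rfl)
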